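/- In TL̂_3(q), for every integer h ≥ 1 there exist c_0,…,c_h in the image of F and a K-linear combination M of Markov elements such that g_{σ_2}·(g_{σ_1}·F(t_{a_2}))^h·g_{σ_2} = Σ_{j=0}^{h} c_j·Y^j + M. -/

import Mathlib

open FreeAlgebra

/-- `V(x,y) = x y x + x y + y x + x + y + 1`. -/
def Vel {R : Type*} [Ring R] (x y : R) : R :=
  x * y * x + x * y + y * x + x + y + 1

/-- Defining relations of the affine Temperley–Lieb algebra `TL̂_{n+1}(q)` of type `Ã_n`.
Generators are indexed by `Fin (n+1)`: for `i < n` the index `i` stands for `g_{σ_{i+1}}`,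
and the index `n` (i.e. `Fin.last n`) stands for `g_{a_{n+1}}`.  For `n = 1` only the
quadratic relations remain, so `TLhat K q 1` is `TL̂_2(q)` (with generators
`t_{σ_1} = g 0` and `t_{a_2} = g 1`). -/
inductive ATLRel (K : Type*) [CommRing K] (q : K) (n : ℕ) :
    FreeAlgebra K (Fin (n + 1)) → FreeAlgebra K (Fin (n + 1)) → Prop
  | quad (i : Fin (n + 1)) :
      ATLRel K q n (ι K i * ι K i) ((q - 1) • ι K i + algebraMap K _ q)
  | comm_ss (i j : Fin (n + 1)) (hi : (i : ℕ) < n) (hj : (j : ℕ) < n)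
      (hd : 2 ≤ Nat.dist (i : ℕ) (j : ℕ)) :
      ATLRel K q n (ι K i * ι K j) (ι K j * ι K i)
  | comm_sa (hn : 2 ≤ n) (i : Fin (n + 1)) (h1 : 1 ≤ (i : ℕ)) (h2 : (i : ℕ) + 2 ≤ n) :
      ATLRel K q n (ι K i * ι K (Fin.last n)) (ι K (Fin.last n) * ι K i)
  | braid_ss (i j : Fin (n + 1)) (hj : (j : ℕ) < n) (hij : (j : ℕ) = (i : ℕ) + 1) :
      ATLRel K q n (ι K i * ι K j * ι K i) (ι K j * ι K i * ι K j)
  | braid_sa (hn : 2 ≤ n) (i : Fin (n + 1)) (h : (i : ℕ) = 0 ∨ (i : ℕ) + 1 = n) :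
      ATLRel K q n (ι K i * ι K (Fin.last n) * ι K i)
        (ι K (Fin.last n) * ι K i * ι K (Fin.last n))
  | v_ss (i j : Fin (n + 1)) (hj : (j : ℕ) < n) (hij : (j : ℕ) = (i : ℕ) + 1) :
      ATLRel K q n (Vel (ι K i) (ι K j)) 0
  | v_s1a (hn : 2 ≤ n) (i : Fin (n + 1)) (hi : (i : ℕ) = 0) :
      ATLRel K q n (Vel (ι K i) (ι K (Fin.last n))) 0
  | v_sna (hn : 2 ≤ n) (i : Fin (n + 1)) (hi : (i : ℕ) + 1 = n) :
      ATLRel K q n (Vel (ι K i) (ι K (Fin.last n))) 0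

/-- The affine Temperley–Lieb algebra `TL̂_{n+1}(q)`. -/
abbrev TLhat (K : Type*) [CommRing K] (q : K) (n : ℕ) :=
  RingQuot (ATLRel K q n)

/-- Defining relations of the type `A` Temperley–Lieb algebra `TL_n(q)` with `n`
generators `g_{σ_1}, …, g_{σ_n}`; index `i : Fin n` stands for `g_{σ_{i+1}}`. -/
inductive TLARel (K : Type*) [CommRing K] (q : K) (n : ℕ) :
    FreeAlgebra K (Fin n) → FreeAlgebra K (Fin n) → Prop
  | quad (i : Fin n) :
      TLARel K q n (ι K i * ι K i) ((q - 1) • ι K i + algebraMap K _ q)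
  | comm (i j : Fin n) (hd : 2 ≤ Nat.dist (i : ℕ) (j : ℕ)) :
      TLARel K q n (ι K i * ι K j) (ι K j * ι K i)
  | braid (i j : Fin n) (hij : (j : ℕ) = (i : ℕ) + 1) :
      TLARel K q n (ι K i * ι K j * ι K i) (ι K j * ι K i * ι K j)
  | vrel (i j : Fin n) (hij : (j : ℕ) = (i : ℕ) + 1) :
      TLARel K q n (Vel (ι K i) (ι K j)) 0

/-- The Temperley–Lieb algebra `TL_n(q)` of type `A` (abstract presentation). -/
abbrev TLA (K : Type*) [CommRing K] (q : K) (n : ℕ) :=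
  RingQuot (TLARel K q n)

variable (K : Type*) [CommRing K] (q : K) (n : ℕ)

/-- The generator `g_i` of `TL̂_{n+1}(q)`. -/
noncomputable def gg (i : Fin (n + 1)) : TLhat K q n :=
  RingQuot.mkAlgHom K (ATLRel K q n) (ι K i)

/-- The inverse `q⁻¹ (g_i - (q-1))` of the generator `g_i` of `TL̂_{n+1}(q)`. -/
noncomputable def ggInv [Invertible q] (i : Fin (n + 1)) : TLhat K q n :=
  ⅟q • (gg K q n i - algebraMap K _ (q - 1))

/-- The generator `g_{σ_{i+1}}` of `TL_n(q)`. -/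
noncomputable def ga (i : Fin n) : TLA K q n :=
  RingQuot.mkAlgHom K (TLARel K q n) (ι K i)

/-- The inverse `q⁻¹ (g - (q-1))` of a generator of `TL_n(q)`. -/
noncomputable def gaInv [Invertible q] (i : Fin n) : TLA K q n :=
  ⅟q • (ga K q n i - algebraMap K _ (q - 1))

/-- The index of `g_{σ_n}` in `TL̂_{n+1}(q)`. -/
def sigmaTop : Fin (n + 1) := ⟨n - 1, Nat.lt_succ_of_le (Nat.sub_le n 1)⟩

/-- The index of `g_{σ_{n-1}}` in `TL̂_{n+1}(q)`. -/
def sigmaSub : Fin (n + 1) := ⟨n - 2, Nat.lt_succ_of_le (Nat.sub_le n 2)⟩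

/-- `F` is the canonical homomorphism `F_n : TL̂_n(q) → TL̂_{n+1}(q)`, determined by
`t_{σ_i} ↦ g_{σ_i}` for `1 ≤ i ≤ n-1` and `t_{a_n} ↦ g_{σ_n} g_{a_{n+1}} g_{σ_n}⁻¹`. -/
def IsF [Invertible q] (F : TLhat K q (n - 1) →ₐ[K] TLhat K q n) : Prop :=
  (∀ i : Fin (n - 1 + 1), (i : ℕ) < n - 1 →
      F (gg K q (n - 1) i) =
        gg K q n (Fin.castLE (Nat.succ_le_succ (Nat.sub_le n 1)) i)) ∧
  F (gg K q (n - 1) (Fin.last (n - 1))) =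
    gg K q n (sigmaTop n) * gg K q n (Fin.last n) * ggInv K q n (sigmaTop n)

/-- Markov elements: `A g_{σ_n}^ε B` with `A, B` in the image of `F_n` and `ε ∈ {0,1}`. -/
def IsMarkov [Invertible q] (F : TLhat K q (n - 1) →ₐ[K] TLhat K q n)
    (x : TLhat K q n) : Prop :=
  ∃ A B : TLhat K q (n - 1), ∃ ε : ℕ, ε ≤ 1 ∧
    x = F A * gg K q n (sigmaTop n) ^ ε * F B

/-- A trace on a `K`-algebra `R`: a `K`-linear map with `τ(xy) = τ(yx)`. -/
def IsTrace {R : Type*} [Ring R] [Algebra K R] (τ : R →ₗ[K] K) : Prop :=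
  ∀ x y : R, τ (x * y) = τ (y * x)

/-- The Dynkin automorphism `ψ` of `TL̂_{n+1}(q)`: `g_i ↦ g_{i+1}` cyclically, i.e.
`g_{σ_1} ↦ g_{σ_2} ↦ ⋯ ↦ g_{σ_n} ↦ g_{a_{n+1}} ↦ g_{σ_1}`. -/
def IsDynkin (ψ : TLhat K q n ≃ₐ[K] TLhat K q n) : Prop :=
  ∀ i : Fin (n + 1), ψ (gg K q n i) = gg K q n (i + 1)

/-- `X = g_{σ_n} g_{σ_{n-1}} ⋯ g_{σ_1} g_{a_{n+1}}`. -/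
noncomputable def Xel : TLhat K q n :=
  (List.ofFn fun t : Fin n =>
      gg K q n ⟨n - 1 - (t : ℕ),
        Nat.lt_succ_of_le (le_trans (Nat.sub_le _ _) (Nat.sub_le _ _))⟩).prod *
    gg K q n (Fin.last n)

/-- `Z = g_{σ_{n-1}} g_{σ_{n-2}} ⋯ g_{σ_1} · F_n(t_{a_n})`. -/
noncomputable def Zel [Invertible q] (F : TLhat K q (n - 1) →ₐ[K] TLhat K q n) :
    TLhat K q n :=
  (List.ofFn fun t : Fin (n - 1) =>
      gg K q n ⟨n - 2 - (t : ℕ),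
        Nat.lt_succ_of_le (le_trans (Nat.sub_le _ _) (Nat.sub_le _ _))⟩).prod *
    F (gg K q (n - 1) (Fin.last (n - 1)))

/-- `g_{σ_n} g_{σ_{n-1}} ⋯ g_{σ_i}`, with the convention that it is `1` when `i = n + 1`. -/
noncomputable def tailChain (i : ℕ) : TLhat K q n :=
  (List.ofFn fun t : Fin (n + 1 - i) =>
      gg K q n ⟨n - 1 - (t : ℕ),
        Nat.lt_succ_of_le (le_trans (Nat.sub_le _ _) (Nat.sub_le _ _))⟩).prod

/-- `g_{σ_{i₀}} g_{σ_{i₀ - 1}} ⋯ g_{σ_1}`, with the convention that it is `1` when `i₀ = 0`. -/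
noncomputable def headChain (i₀ : ℕ) (h : i₀ ≤ n) : TLhat K q n :=
  (List.ofFn fun t : Fin i₀ =>
      gg K q n ⟨i₀ - 1 - (t : ℕ),
        Nat.lt_succ_of_le (le_trans (le_trans (Nat.sub_le _ _) (Nat.sub_le _ _)) h)⟩).prod

/-- `TL_n(q)` realized as the subalgebra of `TL̂_{n+1}(q)` generated by `g_{σ_1}, …, g_{σ_n}`. -/
noncomputable def TLsub : Subalgebra K (TLhat K q n) :=
  Algebra.adjoin K (Set.range fun i : Fin n => gg K q n (Fin.castSucc i))

/-- The generator `g_{σ_{i+1}}` as an element of the subalgebra `TL_n(q)`. -/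
noncomputable def sgen (i : Fin n) : TLsub K q n :=
  ⟨gg K q n (Fin.castSucc i), Algebra.subset_adjoin (Set.mem_range_self i)⟩

/-- The inverse `q⁻¹ (g - (q-1))` of `sgen` inside `TL_n(q)`. -/
noncomputable def sgenInv [Invertible q] (i : Fin n) : TLsub K q n :=
  ⅟q • (sgen K q n i - algebraMap K _ (q - 1))

/-- `g_{σ_1} ⋯ g_{σ_{n-1}} g_{σ_n} g_{σ_{n-1}}⁻¹ ⋯ g_{σ_1}⁻¹` in `TL̂_{n+1}(q)`. -/
noncomputable def EnTarget [Invertible q] : TLhat K q n :=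
  (List.ofFn fun t : Fin (n - 1) =>
      gg K q n (Fin.castLE (le_trans (Nat.sub_le n 1) (Nat.le_succ n)) t)).prod *
    gg K q n (sigmaTop n) *
    (List.ofFn fun t : Fin (n - 1) =>
      ggInv K q n ⟨n - 2 - (t : ℕ),
        Nat.lt_succ_of_le (le_trans (Nat.sub_le _ _) (Nat.sub_le _ _))⟩).prod

/-- `E` is the canonical homomorphism `E_n : TL̂_{n+1}(q) → TL_n(q)`, determined by
`g_{σ_i} ↦ g_{σ_i}` for `1 ≤ i ≤ n` and
`g_{a_{n+1}} ↦ g_{σ_1} ⋯ g_{σ_{n-1}} g_{σ_n} g_{σ_{n-1}}⁻¹ ⋯ g_{σ_1}⁻¹`. -/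
def IsE [Invertible q] (E : TLhat K q n →ₐ[K] TLsub K q n) : Prop :=
  (∀ i : Fin n,
    (E (gg K q n (Fin.castSucc i)) : TLhat K q n) = gg K q n (Fin.castSucc i)) ∧
  (E (gg K q n (Fin.last n)) : TLhat K q n) = EnTarget K q n

/-! ### Auxiliary material for Corollary 5.1.6 -/

namespace Aux516

variable {K : Type*} [CommRing K] {q : K}

section Elements

variable (K q)

/-- `g_{σ_1}` in `TL̂₃`. -/
noncomputable def s1 : TLhat K q 2 := gg K q 2 0
/-- `g_{σ_2}` in `TL̂₃`. -/
noncomputable def s2 : TLhat K q 2 := gg K q 2 1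
/-- `g_{a_3}` in `TL̂₃`. -/
noncomputable def av : TLhat K q 2 := gg K q 2 2
/-- `Y = g_{σ_2} g_{σ_1} g_{a_3}`. -/
noncomputable def Yel : TLhat K q 2 := s2 K q * s1 K q * av K q
/-- `t_{σ_1}` in `TL̂₂`. -/
noncomputable def t0 : TLhat K q 1 := gg K q 1 0
/-- `t_{a_2}` in `TL̂₂`. -/
noncomputable def t1 : TLhat K q 1 := gg K q 1 1

end Elements

section BasicRels

lemma quad3 (i : Fin 3) :
    gg K q 2 i * gg K q 2 i = (q - 1) • gg K q 2 i + algebraMap K _ q := by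
  have h := RingQuot.mkAlgHom_rel K (ATLRel.quad (K := K) (q := q) (n := 2) i)
  simpa [gg, map_mul, map_add, map_smul, AlgHom.commutes] using h

lemma quad2 (i : Fin 2) :
    gg K q 1 i * gg K q 1 i = (q - 1) • gg K q 1 i + algebraMap K _ q := by
  have h := RingQuot.mkAlgHom_rel K (ATLRel.quad (K := K) (q := q) (n := 1) i)
  simpa [gg, map_mul, map_add, map_smul, AlgHom.commutes] using h

lemma braid12 : s1 K q * s2 K q * s1 K q = s2 K q * s1 K q * s2 K q := by
  have h := RingQuot.mkAlgHom_rel K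
    (ATLRel.braid_ss (K := K) (q := q) (n := 2) 0 1 (by norm_num) (by norm_num))
  simpa [s1, s2, gg, map_mul] using h

lemma braid1a : s1 K q * av K q * s1 K q = av K q * s1 K q * av K q := by
  have h := RingQuot.mkAlgHom_rel K
    (ATLRel.braid_sa (K := K) (q := q) (n := 2) (by norm_num) 0 (Or.inl rfl))
  have h2 : Fin.last 2 = (2 : Fin 3) := rfl
  simpa [s1, av, gg, map_mul, h2] using h

lemma braid2a : s2 K q * av K q * s2 K q = av K q * s2 K q * av K q := by
  have h := RingQuot.mkAlgHom_rel K
    (ATLRel.braid_sa (K := K) (q := q) (n := 2) (by norm_num) 1 (Or.inr rfl))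
  have h2 : Fin.last 2 = (2 : Fin 3) := rfl
  simpa [s2, av, gg, map_mul, h2] using h

lemma V12 : Vel (s1 K q) (s2 K q) = 0 := by
  have h := RingQuot.mkAlgHom_rel K
    (ATLRel.v_ss (K := K) (q := q) (n := 2) 0 1 (by norm_num) (by norm_num))
  simpa [Vel, s1, s2, gg, map_mul, map_add, map_one] using h

lemma V2a : Vel (s2 K q) (av K q) = 0 := by
  have h := RingQuot.mkAlgHom_rel K
    (ATLRel.v_sna (K := K) (q := q) (n := 2) (by norm_num) 1 rfl)
  have h2 : Fin.last 2 = (2 : Fin 3) := rfl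
  simpa [Vel, s2, av, gg, map_mul, map_add, map_one, h2] using h

variable [Invertible q]

lemma gg_mul_ggInv (i : Fin 3) : gg K q 2 i * ggInv K q 2 i = 1 := by
  rw [ggInv, mul_smul_comm, mul_sub, quad3, ← Algebra.commutes (q - 1) (gg K q 2 i),
    ← Algebra.smul_def, add_sub_cancel_left, Algebra.algebraMap_eq_smul_one, smul_smul,
    invOf_mul_self, one_smul]

lemma ggInv_mul_gg (i : Fin 3) : ggInv K q 2 i * gg K q 2 i = 1 := by
  rw [ggInv, smul_mul_assoc, sub_mul, quad3, ← Algebra.smul_def, add_sub_cancel_left,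
    Algebra.algebraMap_eq_smul_one, smul_smul, invOf_mul_self, one_smul]

lemma s2_mul_ggInv : s2 K q * ggInv K q 2 1 = 1 := gg_mul_ggInv 1

lemma ggInv_mul_s2 : ggInv K q 2 1 * s2 K q = 1 := ggInv_mul_gg 1

lemma quad_s2 : s2 K q * s2 K q = (q - 1) • s2 K q + algebraMap K _ q := quad3 1

lemma Yel_def : Yel K q = s2 K q * s1 K q * av K q := rfl

lemma qsmul_ggInv (i : Fin 3) :
    q • ggInv K q 2 i = gg K q 2 i - algebraMap K _ (q - 1) := by
  rw [ggInv, smul_smul, mul_invOf_self, one_smul]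

lemma qsmul_ggInv2 :
    q • ggInv K q 2 1 = s2 K q - algebraMap K (TLhat K q 2) (q - 1) :=
  qsmul_ggInv 1

end BasicRels

section FLemmas

variable [Invertible q] {F : TLhat K q 1 →ₐ[K] TLhat K q 2}

lemma hF_t0 (hF : IsF K q 2 F) : F (t0 K q) = s1 K q := by
  have h := hF.1 0 (by norm_num)
  simpa [t0, s1] using h

lemma hF_t1 (hF : IsF K q 2 F) :
    F (t1 K q) = s2 K q * av K q * ggInv K q 2 1 := by
  have h := hF.2
  have h1 : sigmaTop 2 = (1 : Fin 3) := rfl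
  have h2 : Fin.last 2 = (2 : Fin 3) := rfl
  have h3 : Fin.last (2 - 1) = (1 : Fin 2) := rfl
  rw [h1, h2, h3] at h
  simpa [t1, s2, av] using h

/-- `τ s₂ = s₂ a`. -/
lemma tau_s2 (hF : IsF K q 2 F) : F (t1 K q) * s2 K q = s2 K q * av K q := by
  rw [hF_t1 hF, mul_assoc, ggInv_mul_s2, mul_one]

/-- `Y s₁ = τ Y`. -/
lemma Y_s1 (hF : IsF K q 2 F) : Yel K q * s1 K q = F (t1 K q) * Yel K q := by
  rw [hF_t1 hF, Yel]
  calc s2 K q * s1 K q * av K q * s1 K q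
      = s2 K q * (s1 K q * av K q * s1 K q) := by noncomm_ring
    _ = s2 K q * (av K q * s1 K q * av K q) := by rw [braid1a]
    _ = s2 K q * av K q * (ggInv K q 2 1 * gg K q 2 1) * (s1 K q * av K q) := by
        rw [ggInv_mul_gg]; noncomm_ring
    _ = s2 K q * av K q * ggInv K q 2 1 * (s2 K q * s1 K q * av K q) := by
        show _ = _ * (gg K q 2 1 * s1 K q * av K q)
        noncomm_ring

/-- `Y τ = s₁ Y`. -/
lemma Y_tau (hF : IsF K q 2 F) : Yel K q * F (t1 K q) = s1 K q * Yel K q := by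
  rw [hF_t1 hF, Yel]
  calc s2 K q * s1 K q * av K q * (s2 K q * av K q * ggInv K q 2 1)
      = s2 K q * s1 K q * (av K q * s2 K q * av K q) * ggInv K q 2 1 := by noncomm_ring
    _ = s2 K q * s1 K q * (s2 K q * av K q * s2 K q) * ggInv K q 2 1 := by rw [← braid2a]
    _ = s2 K q * s1 K q * s2 K q * av K q * (gg K q 2 1 * ggInv K q 2 1) := by
        show _ = s2 K q * s1 K q * s2 K q * av K q * (s2 K q * ggInv K q 2 1)
        noncomm_ring
    _ = s1 K q * s2 K q * s1 K q * av K q := by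
        rw [gg_mul_ggInv, braid12]; noncomm_ring
    _ = s1 K q * Yel K q := by rw [Yel]; noncomm_ring

/-- `s₂ (s₁ τ) s₂ = s₁ Y`. -/
lemma s2Rs2 (hF : IsF K q 2 F) :
    s2 K q * (s1 K q * F (t1 K q)) * s2 K q = s1 K q * Yel K q := by
  calc s2 K q * (s1 K q * F (t1 K q)) * s2 K q
      = s2 K q * s1 K q * (F (t1 K q) * s2 K q) := by noncomm_ring
    _ = s2 K q * s1 K q * (s2 K q * av K q) := by rw [tau_s2 hF]
    _ = s2 K q * s1 K q * s2 K q * av K q := by noncomm_ring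
    _ = s1 K q * s2 K q * s1 K q * av K q := by rw [braid12]
    _ = s1 K q * Yel K q := by rw [Yel]; noncomm_ring

/-- The `(1+s₁)·G = 0` consequence of the `V`-relations. -/
lemma lemT :
    (Yel K q * s2 K q + Yel K q - 1 - s2 K q)
      + s1 K q * (Yel K q * s2 K q + Yel K q - 1 - s2 K q) = 0 := by
  have hbr : s1 K q * s2 K q * s1 K q - s2 K q * s1 K q * s2 K q = 0 :=
    sub_eq_zero.mpr (braid12)
  have hcert :
      (Yel K q * s2 K q + Yel K q - 1 - s2 K q)
        + s1 K q * (Yel K q * s2 K q + Yel K q - 1 - s2 K q)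
      = s2 K q * s1 K q * (Vel (s2 K q) (av K q))
        + (s1 K q * s2 K q * s1 K q - s2 K q * s1 K q * s2 K q)
            * (av K q * s2 K q + av K q + 1)
        - Vel (s1 K q) (s2 K q) := by
    rw [Vel, Vel, Yel]
    simp only [mul_add, add_mul, mul_sub, sub_mul, mul_assoc, mul_one, one_mul,
      mul_neg, neg_mul]
    abel
  rw [hcert, V2a, V12, hbr]
  simp

/-- The key identity: `Y s₂ = 1 + s₁ + s₂ + s₁ s₂ - Y - q s₁ Y - q s₂ (s₁ τ)`. -/
lemma keyE (hF : IsF K q 2 F) :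
    Yel K q * s2 K q
      = 1 + s1 K q + s2 K q + s1 K q * s2 K q - Yel K q - q • (s1 K q * Yel K q)
        - q • (s2 K q * (s1 K q * F (t1 K q))) := by
  have h1 : Yel K q * s2 K q
      = 1 + s1 K q + s2 K q + s1 K q * s2 K q - Yel K q - s1 K q * Yel K q
        - s1 K q * (Yel K q * s2 K q) := by
    rw [← sub_eq_zero]
    have h2 : Yel K q * s2 K q -
        (1 + s1 K q + s2 K q + s1 K q * s2 K q - Yel K q - s1 K q * Yel K q
          - s1 K q * (Yel K q * s2 K q))
        = (Yel K q * s2 K q + Yel K q - 1 - s2 K q)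
            + s1 K q * (Yel K q * s2 K q + Yel K q - 1 - s2 K q) := by
      simp only [mul_add, add_mul, mul_sub, sub_mul, mul_assoc, mul_one, one_mul,
        mul_neg, neg_mul]
      abel
    rw [h2, lemT]
  have hCa : av K q * algebraMap K (TLhat K q 2) (q - 1) = (q - 1) • av K q := by
    rw [← Algebra.commutes, ← Algebra.smul_def]
  have hqF : q • (s2 K q * (s1 K q * F (t1 K q)))
      = s1 K q * (Yel K q * s2 K q) - (q - 1) • (s1 K q * Yel K q) := by
    rw [hF_t1 hF]
    have e1 : s1 K q * s2 K q * s1 K q * (av K q * s2 K q) = s1 K q * (Yel K q * s2 K q) := by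
      rw [Yel_def]; noncomm_ring
    have e2 : s1 K q * s2 K q * s1 K q * ((q-1) • av K q)
        = (q-1) • (s1 K q * Yel K q) := by
      rw [Yel_def, mul_smul_comm]
      congr 1
      noncomm_ring
    calc q • (s2 K q * (s1 K q * (s2 K q * av K q * ggInv K q 2 1)))
        = q • (s1 K q * s2 K q * s1 K q * (av K q * ggInv K q 2 1)) := by
          congr 1
          calc s2 K q * (s1 K q * (s2 K q * av K q * ggInv K q 2 1))
              = s2 K q * s1 K q * s2 K q * (av K q * ggInv K q 2 1) := by noncomm_ring
            _ = s1 K q * s2 K q * s1 K q * (av K q * ggInv K q 2 1) := by rw [← braid12]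
      _ = s1 K q * s2 K q * s1 K q * (av K q * (q • ggInv K q 2 1)) := by
          rw [mul_smul_comm, mul_smul_comm]
      _ = s1 K q * s2 K q * s1 K q * (av K q * s2 K q)
            - s1 K q * s2 K q * s1 K q * ((q-1) • av K q) := by
          rw [qsmul_ggInv2, mul_sub, hCa, mul_sub]
      _ = s1 K q * (Yel K q * s2 K q) - (q - 1) • (s1 K q * Yel K q) := by
          rw [e1, e2]
  rw [hqF]
  have hre : 1 + s1 K q + s2 K q + s1 K q * s2 K q - Yel K q - q • (s1 K q * Yel K q)
        - (s1 K q * (Yel K q * s2 K q) - (q - 1) • (s1 K q * Yel K q))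
      = 1 + s1 K q + s2 K q + s1 K q * s2 K q - Yel K q - s1 K q * Yel K q
        - s1 K q * (Yel K q * s2 K q) := by
    module
  rw [hre]
  exact h1

end FLemmas

section Conj

variable [Invertible q] {F : TLhat K q 1 →ₐ[K] TLhat K q 2}

lemma adjoin_gg_top : Algebra.adjoin K (Set.range (gg K q 1)) = ⊤ := by
  rw [eq_top_iff]
  intro x hx
  clear hx
  obtain ⟨y, rfl⟩ := RingQuot.mkAlgHom_surjective K (ATLRel K q 1) x
  induction y using FreeAlgebra.induction with
  | grade0 r =>
      rw [AlgHom.commutes]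
      exact Subalgebra.algebraMap_mem _ r
  | grade1 i =>
      exact Algebra.subset_adjoin ⟨i, rfl⟩
  | mul a b ha hb =>
      rw [map_mul]; exact mul_mem ha hb
  | add a b ha hb =>
      rw [map_add]; exact add_mem ha hb

lemma conjY (hF : IsF K q 2 F) (x : TLhat K q 1) :
    ∃ B', B' ∈ F.range ∧ Yel K q * F x = B' * Yel K q := by
  have hx : x ∈ Algebra.adjoin K (Set.range (gg K q 1)) := by
    rw [adjoin_gg_top]; trivial
  induction hx using Algebra.adjoin_induction with
  | mem g hg =>
      obtain ⟨i, rfl⟩ := hg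
      fin_cases i
      · refine ⟨F (t1 K q), ⟨t1 K q, rfl⟩, ?_⟩
        show Yel K q * F (gg K q 1 0) = F (t1 K q) * Yel K q
        rw [show F (gg K q 1 0) = s1 K q from hF_t0 hF]
        exact Y_s1 hF
      · refine ⟨s1 K q, ⟨t0 K q, hF_t0 hF⟩, ?_⟩
        show Yel K q * F (t1 K q) = s1 K q * Yel K q
        exact Y_tau hF
  | algebraMap r =>
      exact ⟨algebraMap K _ r, Subalgebra.algebraMap_mem _ r,
        by rw [AlgHom.commutes, ← Algebra.commutes r (Yel K q), Algebra.commutes]⟩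
  | add a b _ _ iha ihb =>
      obtain ⟨A', hA, hAe⟩ := iha
      obtain ⟨B', hB, hBe⟩ := ihb
      exact ⟨A' + B', add_mem hA hB, by rw [map_add, mul_add, hAe, hBe, add_mul]⟩
  | mul a b _ _ iha ihb =>
      obtain ⟨A', hA, hAe⟩ := iha
      obtain ⟨B', hB, hBe⟩ := ihb
      refine ⟨A' * B', mul_mem hA hB, ?_⟩
      rw [map_mul, ← mul_assoc, hAe, mul_assoc, hBe, ← mul_assoc]

lemma conjY' (hF : IsF K q 2 F) {B : TLhat K q 2} (hB : B ∈ F.range) :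
    ∃ B', B' ∈ F.range ∧ Yel K q * B = B' * Yel K q := by
  obtain ⟨x, rfl⟩ := hB
  exact conjY hF x

lemma conjYpow (hF : IsF K q 2 F) (j : ℕ) {B : TLhat K q 2} (hB : B ∈ F.range) :
    ∃ B', B' ∈ F.range ∧ Yel K q ^ j * B = B' * Yel K q ^ j := by
  induction j with
  | zero => exact ⟨B, hB, by simp⟩
  | succ n ih =>
      obtain ⟨B', hB', he⟩ := ih
      obtain ⟨B'', hB'', he2⟩ := conjY' hF hB'
      refine ⟨B'', hB'', ?_⟩
      rw [pow_succ']
      rw [mul_assoc, he, ← mul_assoc, he2, mul_assoc, ← pow_succ']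

end Conj

section Wm

variable [Invertible q]

variable (K q) in
/-- `R = s₁ τ = F(t_{σ_1} t_{a_2})`. -/
noncomputable def Rel (F : TLhat K q 1 →ₐ[K] TLhat K q 2) : TLhat K q 2 :=
  s1 K q * F (t1 K q)

variable (K q) in
/-- The filtered space of decompositions: `x = ∑_{j<a} c_j Y^j + ∑_{k<b} d_k s₂ R^k`
with all `c_j, d_k` in the image of `F`. -/
def Wm (F : TLhat K q 1 →ₐ[K] TLhat K q 2) (a b : ℕ) (x : TLhat K q 2) : Prop :=
  ∃ c d : ℕ → TLhat K q 2, (∀ j, c j ∈ F.range) ∧ (∀ k, d k ∈ F.range) ∧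
    x = (∑ j ∈ Finset.range a, c j * Yel K q ^ j)
      + ∑ k ∈ Finset.range b, d k * (s2 K q * Rel K q F ^ k)

variable {F : TLhat K q 1 →ₐ[K] TLhat K q 2}

lemma s1_mem (hF : IsF K q 2 F) : s1 K q ∈ F.range := ⟨t0 K q, hF_t0 hF⟩

lemma tau_mem : F (t1 K q) ∈ F.range := ⟨t1 K q, rfl⟩

lemma Rel_mem (hF : IsF K q 2 F) : Rel K q F ∈ F.range :=
  mul_mem (s1_mem hF) tau_mem

lemma Rel_pow_mem (hF : IsF K q 2 F) (k : ℕ) : Rel K q F ^ k ∈ F.range :=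
  pow_mem (Rel_mem hF) k

lemma Wm_zero (a b : ℕ) : Wm K q F a b 0 :=
  ⟨0, 0, fun _ => zero_mem _, fun _ => zero_mem _, by simp⟩

lemma Wm_add {a b : ℕ} {x y : TLhat K q 2} (hx : Wm K q F a b x) (hy : Wm K q F a b y) :
    Wm K q F a b (x + y) := by
  obtain ⟨c, d, hc, hd, rfl⟩ := hx
  obtain ⟨c', d', hc', hd', rfl⟩ := hy
  refine ⟨c + c', d + d', fun j => add_mem (hc j) (hc' j),
    fun k => add_mem (hd k) (hd' k), ?_⟩
  simp only [Pi.add_apply, add_mul, Finset.sum_add_distrib]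
  abel

lemma Wm_smul {a b : ℕ} {x : TLhat K q 2} (κ : K) (hx : Wm K q F a b x) :
    Wm K q F a b (κ • x) := by
  obtain ⟨c, d, hc, hd, rfl⟩ := hx
  refine ⟨κ • c, κ • d, fun j => SMulMemClass.smul_mem κ (hc j),
    fun k => SMulMemClass.smul_mem κ (hd k), ?_⟩
  simp only [Pi.smul_apply, smul_mul_assoc, smul_add, Finset.smul_sum]

lemma Wm_neg {a b : ℕ} {x : TLhat K q 2} (hx : Wm K q F a b x) :
    Wm K q F a b (-x) := by
  have h := Wm_smul (-1 : K) hx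
  rw [← neg_one_smul K x]
  exact h

lemma Wm_sub {a b : ℕ} {x y : TLhat K q 2} (hx : Wm K q F a b x) (hy : Wm K q F a b y) :
    Wm K q F a b (x - y) := by
  rw [sub_eq_add_neg]; exact Wm_add hx (Wm_neg hy)

lemma Wm_mono {a b a' b' : ℕ} (ha : a ≤ a') (hb : b ≤ b') {x : TLhat K q 2}
    (hx : Wm K q F a b x) : Wm K q F a' b' x := by
  obtain ⟨c, d, hc, hd, rfl⟩ := hx
  refine ⟨fun j => if j < a then c j else 0, fun k => if k < b then d k else 0,
    ?_, ?_, ?_⟩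
  · intro j
    show (if j < a then c j else 0) ∈ F.range
    split
    · exact hc j
    · exact zero_mem _
  · intro k
    show (if k < b then d k else 0) ∈ F.range
    split
    · exact hd k
    · exact zero_mem _
  · have h1 : ∑ j ∈ Finset.range a', (if j < a then c j else 0) * Yel K q ^ j
        = ∑ j ∈ Finset.range a, c j * Yel K q ^ j := by
      rw [← Finset.sum_subset (Finset.range_subset_range.mpr ha)
        (fun j _ hj => by rw [if_neg (by simpa using hj), zero_mul])]
      exact Finset.sum_congr rfl fun j hj => by
        rw [if_pos (Finset.mem_range.mp hj)]
    have h2 : ∑ k ∈ Finset.range b', (if k < b then d k else 0) * (s2 K q * Rel K q F ^ k)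
        = ∑ k ∈ Finset.range b, d k * (s2 K q * Rel K q F ^ k) := by
      rw [← Finset.sum_subset (Finset.range_subset_range.mpr hb)
        (fun k _ hk => by rw [if_neg (by simpa using hk), zero_mul])]
      exact Finset.sum_congr rfl fun k hk => by
        rw [if_pos (Finset.mem_range.mp hk)]
    show (∑ j ∈ Finset.range a, c j * Yel K q ^ j)
          + ∑ k ∈ Finset.range b, d k * (s2 K q * Rel K q F ^ k)
        = (∑ j ∈ Finset.range a', (if j < a then c j else 0) * Yel K q ^ j)
          + ∑ k ∈ Finset.range b', (if k < b then d k else 0) * (s2 K q * Rel K q F ^ k)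
    rw [h1, h2]

lemma Wm_lmul {a b : ℕ} {x B : TLhat K q 2} (hB : B ∈ F.range)
    (hx : Wm K q F a b x) : Wm K q F a b (B * x) := by
  obtain ⟨c, d, hc, hd, rfl⟩ := hx
  refine ⟨fun j => B * c j, fun k => B * d k, fun j => mul_mem hB (hc j),
    fun k => mul_mem hB (hd k), ?_⟩
  simp only [mul_add, Finset.mul_sum, mul_assoc]

lemma Wm_single_cY {a b j : ℕ} (hj : j < a) {B : TLhat K q 2} (hB : B ∈ F.range) :
    Wm K q F a b (B * Yel K q ^ j) := by
  refine ⟨fun i => if i = j then B else 0, 0, ?_, fun k => zero_mem _, ?_⟩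
  · intro i
    show (if i = j then B else 0) ∈ F.range
    split
    · exact hB
    · exact zero_mem _
  · have h1 : ∀ i ∈ Finset.range a,
        (if i = j then B else 0) * Yel K q ^ i = if i = j then B * Yel K q ^ j else 0 := by
      intro i _
      rcases eq_or_ne i j with rfl | hne
      · simp
      · simp [hne]
    have h2 : ∑ i ∈ Finset.range a, (if i = j then B else 0) * Yel K q ^ i
        = B * Yel K q ^ j := by
      rw [Finset.sum_congr rfl h1, Finset.sum_ite_eq' (Finset.range a) j
        (fun _ => B * Yel K q ^ j), if_pos (Finset.mem_range.mpr hj)]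
    show B * Yel K q ^ j
        = (∑ i ∈ Finset.range a, (if i = j then B else 0) * Yel K q ^ i)
          + ∑ k ∈ Finset.range b, (0 : TLhat K q 2) * (s2 K q * Rel K q F ^ k)
    rw [h2]
    simp

lemma Wm_single_dsR {a b k : ℕ} (hk : k < b) {B : TLhat K q 2} (hB : B ∈ F.range) :
    Wm K q F a b (B * (s2 K q * Rel K q F ^ k)) := by
  refine ⟨0, fun i => if i = k then B else 0, fun i => zero_mem _, ?_, ?_⟩
  · intro i
    show (if i = k then B else 0) ∈ F.range
    split
    · exact hB
    · exact zero_mem _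
  · have h1 : ∀ i ∈ Finset.range b,
        (if i = k then B else 0) * (s2 K q * Rel K q F ^ i)
          = if i = k then B * (s2 K q * Rel K q F ^ k) else 0 := by
      intro i _
      rcases eq_or_ne i k with rfl | hne
      · simp
      · simp [hne]
    have h2 : ∑ i ∈ Finset.range b, (if i = k then B else 0) * (s2 K q * Rel K q F ^ i)
        = B * (s2 K q * Rel K q F ^ k) := by
      rw [Finset.sum_congr rfl h1, Finset.sum_ite_eq' (Finset.range b) k
        (fun _ => B * (s2 K q * Rel K q F ^ k)), if_pos (Finset.mem_range.mpr hk)]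
    show B * (s2 K q * Rel K q F ^ k)
        = (∑ i ∈ Finset.range a, (0 : TLhat K q 2) * Yel K q ^ i)
          + ∑ i ∈ Finset.range b, (if i = k then B else 0) * (s2 K q * Rel K q F ^ i)
    rw [h2]
    simp

lemma Wm_sum {a b : ℕ} {s : Finset ℕ} {f : ℕ → TLhat K q 2}
    (hf : ∀ i ∈ s, Wm K q F a b (f i)) : Wm K q F a b (∑ i ∈ s, f i) := by
  classical
  induction s using Finset.induction_on with
  | empty => simpa using Wm_zero a b
  | insert _ _ hni ih =>
      rw [Finset.sum_insert hni]
      exact Wm_add (hf _ (Finset.mem_insert_self _ _))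
        (ih fun i hi => hf i (Finset.mem_insert_of_mem hi))

end Wm

section Ymul

variable [Invertible q] {F : TLhat K q 1 →ₐ[K] TLhat K q 2}

lemma Wm_single_c0 {a b : ℕ} (ha : 0 < a) {B : TLhat K q 2} (hB : B ∈ F.range) :
    Wm K q F a b B := by
  simpa using Wm_single_cY (j := 0) ha hB

/-- Expansion of `(Y s₂) R^k`. -/
lemma Ys2R_expand (hF : IsF K q 2 F) (k : ℕ) :
    Yel K q * s2 K q * Rel K q F ^ k
      = Rel K q F ^ k + s1 K q * Rel K q F ^ k + s2 K q * Rel K q F ^ k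
        + s1 K q * (s2 K q * Rel K q F ^ k) - Yel K q * Rel K q F ^ k
        - q • (s1 K q * (Yel K q * Rel K q F ^ k))
        - q • (s2 K q * Rel K q F ^ (k + 1)) := by
  have hkey : Yel K q * s2 K q
      = 1 + s1 K q + s2 K q + s1 K q * s2 K q - Yel K q - q • (s1 K q * Yel K q)
        - q • (s2 K q * Rel K q F) := keyE hF
  rw [hkey]
  simp only [sub_mul, add_mul, one_mul, smul_mul_assoc, mul_assoc, ← pow_succ']

/-- Membership of `B ((Y s₂) R^k)` terms. -/
lemma Wm_BYs2R (hF : IsF K q 2 F) {a b k : ℕ} (ha : 1 ≤ a) (hk : k < b)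
    {B : TLhat K q 2} (hB : B ∈ F.range) :
    Wm K q F (a + 1) (b + 1) (B * (Yel K q * s2 K q * Rel K q F ^ k)) := by
  rw [Ys2R_expand hF]
  simp only [mul_add, mul_sub, mul_smul_comm]
  obtain ⟨u, hu, hue⟩ := conjYpow hF 1 (Rel_pow_mem hF k)
  rw [pow_one] at hue
  have h1 : B * (Yel K q * Rel K q F ^ k) = (B * u) * Yel K q ^ 1 := by
    rw [pow_one, ← mul_assoc, mul_assoc B u, ← hue, mul_assoc]
  have h2 : B * (s1 K q * (Yel K q * Rel K q F ^ k))
      = (B * s1 K q * u) * Yel K q ^ 1 := by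
    rw [pow_one, hue]; noncomm_ring
  refine Wm_sub (Wm_sub (Wm_sub (Wm_add (Wm_add (Wm_add ?_ ?_) ?_) ?_) ?_) ?_) ?_
  · exact Wm_single_c0 (by omega) (mul_mem hB (Rel_pow_mem hF k))
  · rw [← mul_assoc]
    exact Wm_single_c0 (by omega) (mul_mem (mul_mem hB (s1_mem hF)) (Rel_pow_mem hF k))
  · exact Wm_single_dsR (by omega) hB
  · rw [← mul_assoc]
    exact Wm_single_dsR (by omega) (mul_mem hB (s1_mem hF))
  · rw [h1]
    exact Wm_single_cY (by omega) (mul_mem hB hu)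
  · rw [h2]
    exact Wm_smul q (Wm_single_cY (by omega) (mul_mem (mul_mem hB (s1_mem hF)) hu))
  · exact Wm_smul q (Wm_single_dsR (by omega) hB)

/-- Multiplying a decomposable element by `Y` on the left. -/
lemma Wm_Ymul (hF : IsF K q 2 F) {a b : ℕ} (ha : 1 ≤ a) {x : TLhat K q 2}
    (hx : Wm K q F a b x) : Wm K q F (a + 1) (b + 1) (Yel K q * x) := by
  obtain ⟨c, d, hc, hd, rfl⟩ := hx
  rw [mul_add, Finset.mul_sum, Finset.mul_sum]
  refine Wm_add (Wm_sum fun j hj => ?_) (Wm_sum fun k hk => ?_)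
  · obtain ⟨c', hc', he⟩ := conjY' hF (hc j)
    have : Yel K q * (c j * Yel K q ^ j) = c' * Yel K q ^ (j + 1) := by
      rw [← mul_assoc, he, mul_assoc, ← pow_succ']
    rw [this]
    exact Wm_single_cY (by have := Finset.mem_range.mp hj; omega) hc'
  · obtain ⟨d', hd', he⟩ := conjY' hF (hd k)
    have : Yel K q * (d k * (s2 K q * Rel K q F ^ k))
        = d' * (Yel K q * s2 K q * Rel K q F ^ k) := by
      rw [← mul_assoc, he]; noncomm_ring
    rw [this]
    exact Wm_BYs2R hF ha (Finset.mem_range.mp hk) hd'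

/-- `Y^j s₂` is decomposable with budgets `(j+1, j+1)`. -/
lemma Ys2pow (hF : IsF K q 2 F) (j : ℕ) :
    Wm K q F (j + 1) (j + 1) (Yel K q ^ j * s2 K q) := by
  induction j with
  | zero =>
      simpa using Wm_single_dsR (b := 1) (k := 0) (by omega) (one_mem F.range)
  | succ n ih =>
      have : Yel K q ^ (n + 1) * s2 K q = Yel K q * (Yel K q ^ n * s2 K q) := by
        rw [pow_succ', mul_assoc]
      rw [this]
      exact Wm_Ymul hF (by omega) ih

end Ymul

section Main

variable [Invertible q] {F : TLhat K q 1 →ₐ[K] TLhat K q 2}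

variable (K q) in
/-- `P_h = s₂ R^h s₂`. -/
noncomputable def Pel (F : TLhat K q 1 →ₐ[K] TLhat K q 2) (h : ℕ) : TLhat K q 2 :=
  s2 K q * Rel K q F ^ h * s2 K q

lemma ggInv_expand :
    ggInv K q 2 1 = ⅟q • s2 K q - (⅟q * (q - 1)) • (1 : TLhat K q 2) := by
  rw [ggInv, smul_sub]
  congr 1
  rw [Algebra.algebraMap_eq_smul_one, smul_smul]

lemma s2Rs2' (hF : IsF K q 2 F) :
    s2 K q * (Rel K q F * s2 K q) = s1 K q * Yel K q := by
  rw [← mul_assoc]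
  exact s2Rs2 hF

lemma Pel_succ (hF : IsF K q 2 F) (h : ℕ) :
    Pel K q F (h + 1)
      = Pel K q F h * (ggInv K q 2 1 * (Rel K q F * s2 K q)) := by
  unfold Pel
  calc s2 K q * Rel K q F ^ (h+1) * s2 K q
      = s2 K q * Rel K q F ^ h * (gg K q 2 1 * ggInv K q 2 1) * (Rel K q F * s2 K q) := by
        rw [gg_mul_ggInv, mul_one, pow_succ]; noncomm_ring
    _ = s2 K q * Rel K q F ^ h * s2 K q * (ggInv K q 2 1 * (Rel K q F * s2 K q)) := by
        show s2 K q * Rel K q F ^ h * (s2 K q * ggInv K q 2 1) * (Rel K q F * s2 K q) = _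
        noncomm_ring

lemma YjRs2_mem (hF : IsF K q 2 F) (j : ℕ) {B : TLhat K q 2} (hB : B ∈ F.range) :
    Wm K q F (j + 1) (j + 1) (B * (Yel K q ^ j * (Rel K q F * s2 K q))) := by
  obtain ⟨u, hu, hue⟩ := conjYpow hF j (Rel_mem hF)
  have he : B * (Yel K q ^ j * (Rel K q F * s2 K q))
      = (B * u) * (Yel K q ^ j * s2 K q) := by
    rw [← mul_assoc (Yel K q ^ j), hue]; noncomm_ring
  rw [he]
  exact Wm_lmul (mul_mem hB hu) (Ys2pow hF j)

lemma Yjs1Y_mem (hF : IsF K q 2 F) {j a b : ℕ} (hj : j + 1 < a)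
    {B : TLhat K q 2} (hB : B ∈ F.range) :
    Wm K q F a b (B * (Yel K q ^ j * (s1 K q * Yel K q))) := by
  obtain ⟨u, hu, hue⟩ := conjYpow hF j (s1_mem hF)
  have he : B * (Yel K q ^ j * (s1 K q * Yel K q))
      = (B * u) * Yel K q ^ (j + 1) := by
    rw [← mul_assoc (Yel K q ^ j), hue, pow_succ]; noncomm_ring
  rw [he]
  exact Wm_single_cY hj (mul_mem hB hu)

/-- Main lemma: `P_h` is decomposable with budgets `(h+1, h)`. -/
lemma Pel_mem (hF : IsF K q 2 F) : ∀ h : ℕ, 1 ≤ h → Wm K q F (h + 1) h (Pel K q F h) := by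
  intro h
  induction h using Nat.strong_induction_on with
  | _ h IH =>
    intro hh
    match h, hh with
    | 1, _ =>
      have he : Pel K q F 1 = s1 K q * Yel K q ^ 1 := by
        rw [Pel, pow_one, pow_one]
        exact s2Rs2 hF
      rw [he]
      exact Wm_single_cY (by omega) (s1_mem hF)
    | (n+2), _ => ?_
    set n' := n + 1 with hn'
    -- helper : Pel k * (R s2) is decomposable for k ≤ n'
    have hPR : ∀ k : ℕ, k ≤ n' → Wm K q F (k + 2) (k + 2) (Pel K q F k * (Rel K q F * s2 K q)) := by
      intro k hk
      match k with
      | 0 =>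
        have h0 : Pel K q F 0 = s2 K q * s2 K q := by rw [Pel, pow_zero, mul_one]
        have h1 : Pel K q F 0 * (Rel K q F * s2 K q)
            = (q - 1) • (s1 K q * Yel K q ^ 1)
              + q • (Rel K q F * (s2 K q * Rel K q F ^ 0)) := by
          rw [h0, quad_s2, add_mul, smul_mul_assoc, ← Algebra.smul_def,
            pow_zero, mul_one, pow_one, s2Rs2' hF]
        rw [h1]
        exact Wm_add (Wm_smul _ (Wm_single_cY (by omega) (s1_mem hF)))
          (Wm_smul _ (Wm_single_dsR (by omega) (Rel_mem hF)))
      | (m+1) =>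
        obtain ⟨c', d', hc', hd', hPm⟩ := IH (m+1) (by omega) (by omega)
        have he : Pel K q F (m+1) * (Rel K q F * s2 K q)
            = (∑ j ∈ Finset.range (m+2), c' j * (Yel K q ^ j * (Rel K q F * s2 K q)))
              + ∑ i ∈ Finset.range (m+1),
                  d' i * (Pel K q F (i+1)) := by
          rw [hPm, add_mul, Finset.sum_mul, Finset.sum_mul]
          congr 1
          · exact Finset.sum_congr rfl fun j _ => by rw [mul_assoc]
          · refine Finset.sum_congr rfl fun i _ => ?_
            rw [mul_assoc]
            congr 1
            rw [Pel, pow_succ]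
            noncomm_ring
        rw [he]
        refine Wm_add (Wm_sum fun j hj => ?_) (Wm_sum fun i hi => ?_)
        · exact Wm_mono (by have := Finset.mem_range.mp hj; omega)
            (by have := Finset.mem_range.mp hj; omega) (YjRs2_mem hF j (hc' j))
        · exact Wm_mono (by have := Finset.mem_range.mp hi; omega)
            (by have := Finset.mem_range.mp hi; omega)
            (Wm_lmul (hd' i) (IH (i+1) (by have := Finset.mem_range.mp hi; omega) (by omega)))
    -- main step
    obtain ⟨c, d, hc, hd, hPn⟩ := IH n' (by omega) (by omega)
    have hstep : Pel K q F (n' + 1)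
        = (∑ j ∈ Finset.range (n' + 1),
            c j * (Yel K q ^ j * (ggInv K q 2 1 * (Rel K q F * s2 K q))))
          + ∑ k ∈ Finset.range n',
            d k * ((s2 K q * Rel K q F ^ k) * (ggInv K q 2 1 * (Rel K q F * s2 K q))) := by
      rw [Pel_succ hF, hPn, add_mul, Finset.sum_mul, Finset.sum_mul]
      congr 1
      · exact Finset.sum_congr rfl fun j _ => by rw [mul_assoc]
      · exact Finset.sum_congr rfl fun k _ => by rw [mul_assoc]
    rw [hstep]
    refine Wm_add (Wm_sum fun j hj => ?_) (Wm_sum fun k hk => ?_)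
    · -- c-terms
      have hj' := Finset.mem_range.mp hj
      have hsplit : Yel K q ^ j * (ggInv K q 2 1 * (Rel K q F * s2 K q))
          = ⅟q • (Yel K q ^ j * (s1 K q * Yel K q))
            - (⅟q * (q - 1)) • (Yel K q ^ j * (Rel K q F * s2 K q)) := by
        rw [ggInv_expand, sub_mul, smul_mul_assoc, smul_mul_assoc, one_mul,
          ← s2Rs2' hF, mul_sub, mul_smul_comm, mul_smul_comm]
      rw [hsplit, mul_sub, mul_smul_comm, mul_smul_comm]
      refine Wm_sub (Wm_smul _ (Yjs1Y_mem hF (by omega) (hc j)))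
        (Wm_smul _ (Wm_mono (by omega) (by omega) (YjRs2_mem hF j (hc j))))
    · -- d-terms
      have hk' := Finset.mem_range.mp hk
      have hsplit : (s2 K q * Rel K q F ^ k) * (ggInv K q 2 1 * (Rel K q F * s2 K q))
          = ⅟q • (Pel K q F k * (Rel K q F * s2 K q))
            - (⅟q * (q - 1)) • Pel K q F (k + 1) := by
        rw [ggInv_expand, sub_mul, smul_mul_assoc, smul_mul_assoc, one_mul,
          mul_sub, mul_smul_comm, mul_smul_comm]
        congr 2
        · rw [Pel]; noncomm_ring
        · rw [Pel, pow_succ]; noncomm_ring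
      rw [hsplit, mul_sub, mul_smul_comm, mul_smul_comm]
      refine Wm_sub (Wm_smul _ (Wm_mono (by omega) (by omega)
          (Wm_lmul (hd k) (hPR k (by omega)))))
        (Wm_smul _ (Wm_mono (by omega) (by omega)
          (Wm_lmul (hd k) (IH (k+1) (by omega) (by omega)))))

end Main

section Final

variable [Invertible q] {F : TLhat K q 1 →ₐ[K] TLhat K q 2}

lemma markov_term (hF : IsF K q 2 F) {B : TLhat K q 2} (hB : B ∈ F.range) (k : ℕ) :
    IsMarkov K q 2 F (B * (s2 K q * Rel K q F ^ k)) := by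
  obtain ⟨A, hA0⟩ := hB
  have hA : F A = B := hA0
  refine ⟨A, (t0 K q * t1 K q) ^ k, 1, le_refl 1, ?_⟩
  have hFB : F ((t0 K q * t1 K q) ^ k) = Rel K q F ^ k := by
    rw [map_pow, map_mul, hF_t0 hF]; rfl
  have hs : gg K q 2 (sigmaTop 2) = s2 K q := rfl
  rw [hFB, hA, hs, pow_one, mul_assoc]

end Final

end Aux516
/-- Corollary 5.1.6: in `TL̂_3(q)`, for every `h ≥ 1`,
`g_{σ_2} (g_{σ_1} F(t_{a_2}))^h g_{σ_2} = Σ_{j=0}^{h} c_j Y^j + M` with the `c_j` in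
the image of `F`, `Y = g_{σ_2} g_{σ_1} g_{a_3}` and `M` a `K`-linear combination of
Markov elements. -/
theorem corollary_5_1_6
    (K : Type*) [CommRing K] [IsDomain K] [CharZero K]
    (q sq : K) [Invertible q] [Invertible (q + 1)] (hsq : sq * sq = q)
    (F : TLhat K q 1 →ₐ[K] TLhat K q 2) (hF : IsF K q 2 F)
    (h : ℕ) (hh : 1 ≤ h) :
    ∃ c : ℕ → TLhat K q 2, (∀ j, c j ∈ F.range) ∧
      ∃ M ∈ Submodule.span K {x : TLhat K q 2 | IsMarkov K q 2 F x},
        gg K q 2 1 * (gg K q 2 0 * F (gg K q 1 1)) ^ h * gg K q 2 1 =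
          (∑ j ∈ Finset.range (h + 1),
            c j * (gg K q 2 1 * gg K q 2 0 * gg K q 2 2) ^ j) + M := by
  obtain ⟨c, d, hc, hd, heq⟩ := Aux516.Pel_mem hF h hh
  refine ⟨c, hc, ∑ k ∈ Finset.range h, d k * (Aux516.s2 K q * Aux516.Rel K q F ^ k),
    Submodule.sum_mem _ fun k _ => Submodule.subset_span (Aux516.markov_term hF (hd k) k),
    ?_⟩
  exact heq
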